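/- arXiv:1211.3461 — 2 statements merged into one kernel-verified Lean document; each statement's English description precedes it below -/
import Mathlib

section
/- Let n ≥ 1, let ζ be a primitive (2n−1)-th root of unity in ℂ, and for l = 1,…,2n−1 let v_l = (ζ^l, ζ^{2l}, …, ζ^{nl}) ∈ ℂⁿ. Let K_n' be the n×n×n tensor whose (i,j,k) entry is 1 if i+j+k = n+2 (indices running from 1 to n) and 0 otherwise. Then K_n' = (1/(2n−1)) Σ_{l=1}^{2n−1} ζ^{l(n−3)} v_l ⊗ v_l ⊗ v_l; in particular the complex tensor rank of K_n' is at most 2n−1. -/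
open scoped BigOperators
open Matrix

/-- An `n×n×n` tensor with entries in `K`. -/
abbrev Tensor (n : ℕ) (K : Type*) := Fin n × Fin n × Fin n → K

namespace Tensor

variable {n : ℕ} {K : Type*}

section CommRing
variable [CommRing K]

/-- The right action of a triple of `n×n` matrices on an `n×n×n` tensor:
`(P(g₁,g₂,g₃))_{ijk} = Σ_{a,b,c} P_{abc} g₁(a,i) g₂(b,j) g₃(c,k)`. -/
def act (P : Tensor n K) (g₁ g₂ g₃ : Matrix (Fin n) (Fin n) K) : Tensor n K :=
  fun x => ∑ a, ∑ b, ∑ c, P (a, b, c) * g₁ a x.1 * g₂ b x.2.1 * g₃ c x.2.2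

/-- The diagonal tensor `D`, with `D_{iii} = 1` and all other entries `0`. -/
def DT (n : ℕ) (K : Type*) [CommRing K] : Tensor n K :=
  fun x => if x.1 = x.2.1 ∧ x.2.1 = x.2.2 then 1 else 0

/-- The orbit of the diagonal tensor `D` under `GL(n,K)×GL(n,K)×GL(n,K)`. -/
def orbitD (n : ℕ) (K : Type*) [CommRing K] : Set (Tensor n K) :=
  {P | ∃ g₁ g₂ g₃ : Matrix (Fin n) (Fin n) K,
    IsUnit g₁.det ∧ IsUnit g₂.det ∧ IsUnit g₃.det ∧ P = (DT n K).act g₁ g₂ g₃}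

/-- `P` admits a decomposition as a sum of `r` rank-one tensors. -/
def HasRankLE (P : Tensor n K) (r : ℕ) : Prop :=
  ∃ u v w : Fin r → Fin n → K, P = fun x => ∑ l, u l x.1 * v l x.2.1 * w l x.2.2

/-- The tensor rank of `P`: the smallest `r` such that `P` is a sum of `r` rank-one tensors. -/
noncomputable def rank (P : Tensor n K) : ℕ := sInf {r | P.HasRankLE r}

/-- The three flattenings of `P` to an `n²×n` matrix; the columns of `flatten i P` are
indexed by the `i`-th index of `P`. -/
def flatten (i : Fin 3) (P : Tensor n K) : Matrix (Fin n × Fin n) (Fin n) K :=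
  ![Matrix.of fun p a => P (a, p.1, p.2),
    Matrix.of fun p b => P (p.1, b, p.2),
    Matrix.of fun p c => P (p.1, p.2, c)] i

/-- Contraction `P *_i v` of the `i`-th index of `P` against a vector `v`. -/
def contr (i : Fin 3) (P : Tensor n K) (v : Fin n → K) : Matrix (Fin n) (Fin n) K :=
  ![Matrix.of fun j k => ∑ a, P (a, j, k) * v a,
    Matrix.of fun j k => ∑ b, P (j, b, k) * v b,
    Matrix.of fun j k => ∑ c, P (j, k, c) * v c] i

/-- The `j`-th `i`-slice of `P`, i.e. `P *_i e_j`. -/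
def slice (i : Fin 3) (P : Tensor n K) (j : Fin n) : Matrix (Fin n) (Fin n) K :=
  contr i P (Pi.single j 1)

/-- The commutation relations in index `i`:
`(P*_i e_j)·adj(P*_i v)·(P*_i e_k) = (P*_i e_k)·adj(P*_i v)·(P*_i e_j)`
for all `v` and all `j < k`. -/
def CommRel (i : Fin 3) (P : Tensor n K) : Prop :=
  ∀ (v : Fin n → K) (j k : Fin n), j < k →
    slice i P j * (contr i P v).adjugate * slice i P k
      = slice i P k * (contr i P v).adjugate * slice i P j

/-- The matrix `P *_i x`, where `x` is a vector of indeterminates. -/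
noncomputable def contrX (i : Fin 3) (P : Tensor n K) :
    Matrix (Fin n) (Fin n) (MvPolynomial (Fin n) K) :=
  ![Matrix.of fun j k => ∑ a, MvPolynomial.C (P (a, j, k)) * MvPolynomial.X a,
    Matrix.of fun j k => ∑ b, MvPolynomial.C (P (j, b, k)) * MvPolynomial.X b,
    Matrix.of fun j k => ∑ c, MvPolynomial.C (P (j, k, c)) * MvPolynomial.X c] i

/-- `h_i(P;x) = det (P *_i x)`, a polynomial in the indeterminates `x`. -/
noncomputable def hpoly (i : Fin 3) (P : Tensor n K) : MvPolynomial (Fin n) K :=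
  (contrX i P).det

/-- The Hessian matrix of a polynomial in the indeterminates `x`. -/
noncomputable def hess (p : MvPolynomial (Fin n) K) :
    Matrix (Fin n) (Fin n) (MvPolynomial (Fin n) K) :=
  Matrix.of fun a b => MvPolynomial.pderiv a (MvPolynomial.pderiv b p)

/-- `f_i(P;x) = (-1)^(n-1) det (H_x (h_i(P;x)))`. -/
noncomputable def fpoly (i : Fin 3) (P : Tensor n K) : MvPolynomial (Fin n) K :=
  (-1) ^ (n - 1) * (hess (hpoly i P)).det

/-- Substitution `x ↦ g x` in a polynomial in the indeterminates `x`. -/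
noncomputable def substX (g : Matrix (Fin n) (Fin n) K) (p : MvPolynomial (Fin n) K) :
    MvPolynomial (Fin n) K :=
  MvPolynomial.aeval (fun j => ∑ k, MvPolynomial.C (g j k) * MvPolynomial.X k) p

end CommRing

/-- A complex tensor is real when all of its entries are real. -/
def IsReal (P : Tensor n ℂ) : Prop := ∀ x, (P x).im = 0

/-- The inclusion of real tensors into complex tensors. -/
noncomputable def toC (n : ℕ) : Tensor n ℝ → Tensor n ℂ := fun P x => (P x : ℂ)

/-- The orbit `𝒟(ℝ)` of `D` under `GL(n,ℝ)³`, viewed inside the complex tensors. -/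
def orbitDR (n : ℕ) : Set (Tensor n ℂ) := toC n '' orbitD n ℝ

/-- The border rank of `P`: the smallest `r` such that `P` is a limit of tensors of
rank at most `r`. -/
noncomputable def borderRank (P : Tensor n ℂ) : ℕ :=
  sInf {r | P ∈ closure {Q : Tensor n ℂ | Q.HasRankLE r}}

/-- The first nonzero entry of every row of `g` equals `1`. -/
def FirstNonzeroOne (g : Matrix (Fin n) (Fin n) ℂ) : Prop :=
  ∀ r c : Fin n, g r c ≠ 0 → (∀ c' : Fin n, c' < c → g r c' = 0) → g r c = 1

/-- The first `2k` rows of `g` are non-real and not purely imaginary, and occur in complex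
conjugate pairs (row `2j+1` conjugate to row `2j`); the remaining rows are real. -/
def ConjPairStructure (k : ℕ) (g : Matrix (Fin n) (Fin n) ℂ) : Prop :=
  (∀ m m' : Fin n, (m : ℕ) < 2 * k → Even (m : ℕ) → (m' : ℕ) = (m : ℕ) + 1 →
      ∀ c, g m' c = (starRingEnd ℂ) (g m c)) ∧
  (∀ m : Fin n, (m : ℕ) < 2 * k → (∃ c, (g m c).im ≠ 0) ∧ (∃ c, (g m c).re ≠ 0)) ∧
  (∀ m : Fin n, 2 * k ≤ (m : ℕ) → ∀ c, (g m c).im = 0)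

/-- A normalized decomposition `P = D(g₁,g₂,g₃)` exhibiting signature `(n-2k, k)`:
the first nonzero entry of every row of `g₁,g₂` is `1`, and each `gᵢ` has its first `2k`
rows non-real occurring in conjugate pairs, with the remaining rows real. -/
def SigDecomp (P : Tensor n ℂ) (k : ℕ) (g₁ g₂ g₃ : Matrix (Fin n) (Fin n) ℂ) : Prop :=
  2 * k ≤ n ∧ IsUnit g₁.det ∧ IsUnit g₂.det ∧ IsUnit g₃.det ∧
  P = (DT n ℂ).act g₁ g₂ g₃ ∧
  FirstNonzeroOne g₁ ∧ FirstNonzeroOne g₂ ∧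
  ConjPairStructure k g₁ ∧ ConjPairStructure k g₂ ∧ ConjPairStructure k g₃

/-- `P` has signature `(n-2k, k)`: its unique rank-`n` decomposition has exactly `2k`
non-real rank-one summands, occurring in conjugate pairs. -/
def HasSignature (P : Tensor n ℂ) (k : ℕ) : Prop :=
  ∃ g₁ g₂ g₃ : Matrix (Fin n) (Fin n) ℂ, SigDecomp P k g₁ g₂ g₃

/-- Cayley's hyperdeterminant of a `2×2×2` tensor. -/
noncomputable def Delta (P : Tensor 2 ℂ) : ℂ :=
  (P (0,0,0) ^ 2 * P (1,1,1) ^ 2 + P (0,0,1) ^ 2 * P (1,1,0) ^ 2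
    + P (0,1,0) ^ 2 * P (1,0,1) ^ 2 + P (0,1,1) ^ 2 * P (1,0,0) ^ 2)
  - 2 * (P (0,0,0) * P (0,0,1) * P (1,1,0) * P (1,1,1)
    + P (0,0,0) * P (0,1,0) * P (1,0,1) * P (1,1,1)
    + P (0,0,0) * P (0,1,1) * P (1,0,0) * P (1,1,1)
    + P (0,0,1) * P (0,1,0) * P (1,0,1) * P (1,1,0)
    + P (0,0,1) * P (0,1,1) * P (1,1,0) * P (1,0,0)
    + P (0,1,0) * P (0,1,1) * P (1,0,1) * P (1,0,0))
  + 4 * (P (0,0,0) * P (0,1,1) * P (1,0,1) * P (1,1,0)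
    + P (0,0,1) * P (0,1,0) * P (1,0,0) * P (1,1,1))

/-- The Levi-Civita symbol on three indices, `ε₁₂₃ = 1`. -/
noncomputable def eps (i j k : Fin 3) : ℂ :=
  if (i, j, k) = ((0 : Fin 3), (1 : Fin 3), (2 : Fin 3)) ∨ (i, j, k) = (1, 2, 0)
      ∨ (i, j, k) = (2, 0, 1) then 1
  else if (i, j, k) = ((2 : Fin 3), (1 : Fin 3), (0 : Fin 3)) ∨ (i, j, k) = (1, 0, 2)
      ∨ (i, j, k) = (0, 2, 1) then -1
  else 0

/-- The degree-6 invariant `τ₃` of `3×3×3` tensors, given by a six-fold Levi-Civita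
contraction. -/
noncomputable def tau3 (P : Tensor 3 ℂ) : ℂ :=
  ∑ i : Fin 3 × Fin 3 × Fin 3, ∑ j : Fin 3 × Fin 3 × Fin 3, ∑ k : Fin 3 × Fin 3 × Fin 3,
    ∑ l : Fin 3 × Fin 3 × Fin 3, ∑ m : Fin 3 × Fin 3 × Fin 3, ∑ o : Fin 3 × Fin 3 × Fin 3,
      P i * P j * P k * P l * P m * P o *
        eps i.1 j.1 k.1 * eps j.2.1 k.2.1 l.2.1 * eps k.2.2 l.2.2 m.2.2 *
        eps l.1 m.1 o.1 * eps m.2.1 o.2.1 i.2.1 * eps o.2.2 i.2.2 j.2.2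

end Tensor

/-- The tensor `K_n'` with `(i,j,k)` entry `1` when `i+j+k = n+2` (1-based indices) and `0`
otherwise. -/
noncomputable def KnPrime (n : ℕ) : Tensor n ℂ :=
  fun x => if (x.1 : ℕ) + (x.2.1 : ℕ) + (x.2.2 : ℕ) = n - 1 then 1 else 0

private lemma sum_pow_primroot (N : ℕ) (ζ : ℂ) (hζ : IsPrimitiveRoot ζ N) (m : ℕ) :
    ∑ l ∈ Finset.Icc 1 N, ζ ^ (l * m) = if N ∣ m then (N : ℂ) else 0 := by
  have hx : (ζ ^ m) ^ N = 1 := by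
    rw [← pow_mul, mul_comm, pow_mul, hζ.pow_eq_one, one_pow]
  have : ∑ l ∈ Finset.Icc 1 N, ζ ^ (l * m) = ∑ l ∈ Finset.range N, (ζ ^ m) * (ζ ^ m) ^ l := by
    rw [← Finset.Ico_add_one_right_eq_Icc, Finset.sum_Ico_eq_sum_range]
    simp only [Nat.add_sub_cancel]
    refine Finset.sum_congr rfl fun l _ => ?_
    rw [← pow_succ', ← pow_mul, mul_comm m, Nat.add_comm 1 l]
  rw [this, ← Finset.mul_sum]
  by_cases h : N ∣ m
  · have h1 : ζ ^ m = 1 := hζ.pow_eq_one_iff_dvd m |>.mpr h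
    simp [h1, h]
  · have h1 : ζ ^ m ≠ 1 := fun hc => h ((hζ.pow_eq_one_iff_dvd m).mp hc)
    rw [geom_sum_eq h1, hx]
    simp [h]

/-- for a primitive `(2n-1)`-th root of unity `ζ` and
`v_l = (ζ^l, …, ζ^{nl})`, `K_n' = (1/(2n-1)) Σ_{l=1}^{2n-1} ζ^{l(n-3)} v_l ⊗ v_l ⊗ v_l`;
in particular the rank of `K_n'` is at most `2n-1`. -/
theorem statement_18 (n : ℕ) (hn : 1 ≤ n) (ζ : ℂ) (hζ : IsPrimitiveRoot ζ (2 * n - 1)) :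
    (KnPrime n = fun x =>
      (1 / (2 * (n : ℂ) - 1)) * ∑ l ∈ Finset.Icc 1 (2 * n - 1),
        ζ ^ ((l : ℤ) * ((n : ℤ) - 3)) *
          (ζ ^ (l * ((x.1 : ℕ) + 1)) * ζ ^ (l * ((x.2.1 : ℕ) + 1))
            * ζ ^ (l * ((x.2.2 : ℕ) + 1))))
    ∧ Tensor.rank (KnPrime n) ≤ 2 * n - 1 := by
  have hN : 1 ≤ 2 * n - 1 := by omega
  have hζ0 : ζ ≠ 0 := hζ.ne_zero (by omega)
  have hcast : ((2 * n - 1 : ℕ) : ℂ) = 2 * (n : ℂ) - 1 := by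
    push_cast [Nat.cast_sub (by omega : 1 ≤ 2 * n)]; ring
  have hNe : 2 * (n : ℂ) - 1 ≠ 0 := by
    rw [← hcast]
    exact_mod_cast (by omega : (2 * n - 1 : ℕ) ≠ 0)
  have h1 : (KnPrime n = fun x =>
      (1 / (2 * (n : ℂ) - 1)) * ∑ l ∈ Finset.Icc 1 (2 * n - 1),
        ζ ^ ((l : ℤ) * ((n : ℤ) - 3)) *
          (ζ ^ (l * ((x.1 : ℕ) + 1)) * ζ ^ (l * ((x.2.1 : ℕ) + 1))
            * ζ ^ (l * ((x.2.2 : ℕ) + 1)))) := by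
    funext x
    obtain ⟨⟨i, hi⟩, ⟨j, hj⟩, ⟨k, hk⟩⟩ := x
    show (if i + j + k = n - 1 then (1:ℂ) else 0) = _
    have hterm : ∀ l : ℕ, ζ ^ ((l : ℤ) * ((n : ℤ) - 3)) *
        (ζ ^ (l * (i + 1)) * ζ ^ (l * (j + 1)) * ζ ^ (l * (k + 1)))
        = ζ ^ (l * (n + i + j + k)) := by
      intro l
      rw [← zpow_natCast ζ (l * (i + 1)), ← zpow_natCast ζ (l * (j + 1)),
        ← zpow_natCast ζ (l * (k + 1)), ← zpow_natCast ζ (l * (n + i + j + k)),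
        ← zpow_add₀ hζ0, ← zpow_add₀ hζ0, ← zpow_add₀ hζ0]
      congr 1
      push_cast
      ring
    rw [Finset.sum_congr rfl (fun l _ => hterm l), sum_pow_primroot _ _ hζ]
    have hdvd : (2 * n - 1) ∣ (n + i + j + k) ↔ i + j + k = n - 1 := by
      constructor
      · rintro ⟨c, hc⟩
        rcases c with _ | _ | c
        · omega
        · omega
        · have : (2 * n - 1) * 2 ≤ (2 * n - 1) * (c + 1 + 1) :=
            Nat.mul_le_mul_left _ (by omega)
          omega
      · intro h
        exact ⟨1, by omega⟩
    by_cases h : i + j + k = n - 1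
    · rw [if_pos h, if_pos (hdvd.mpr h), hcast]
      field_simp
    · rw [if_neg h, if_neg (fun hd => h (hdvd.mp hd)), mul_zero]
  refine ⟨h1, ?_⟩
  have hrank : (KnPrime n).HasRankLE (2 * n - 1) := by
    refine ⟨fun l i => (1 / (2 * (n : ℂ) - 1)) *
        ζ ^ ((((l : ℕ) + 1 : ℕ) : ℤ) * ((n : ℤ) - 3)) * ζ ^ (((l : ℕ) + 1) * ((i : ℕ) + 1)),
      fun l j => ζ ^ (((l : ℕ) + 1) * ((j : ℕ) + 1)),
      fun l k => ζ ^ (((l : ℕ) + 1) * ((k : ℕ) + 1)), ?_⟩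
    rw [h1]
    funext x
    beta_reduce
    rw [Finset.mul_sum, ← Finset.Ico_add_one_right_eq_Icc, Finset.sum_Ico_eq_sum_range,
      Fin.sum_univ_eq_sum_range (fun m : ℕ => 1 / (2 * (n : ℂ) - 1) *
        ζ ^ (((m + 1 : ℕ) : ℤ) * ((n : ℤ) - 3)) * ζ ^ ((m + 1) * ((x.1 : ℕ) + 1)) *
        ζ ^ ((m + 1) * ((x.2.1 : ℕ) + 1)) * ζ ^ ((m + 1) * ((x.2.2 : ℕ) + 1)))]
    simp only [Nat.add_sub_cancel]
    refine Finset.sum_congr rfl fun l _ => ?_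
    rw [Nat.add_comm 1 l]
    push_cast
    ring
  exact Nat.sInf_le hrank
end

section
/- For every n ≥ 1, let K_n be the n×n×n tensor whose m-th 3-slice (the matrix K_n(·,·,m)) has entries 1 on the (m−1)-st superdiagonal (positions (i, i+m−1)) and 0 elsewhere. Then K_n has border rank n over ℂ (it is the limit of a sequence of tensors of complex rank n, but is not a limit of tensors of smaller rank) and complex tensor rank exactly 2n−1. -/
open scoped BigOperators
open Matrix

/-- The tensor `K_n` whose `m`-th 3-slice has `1`s on the `(m-1)`-st superdiagonal and `0`s
elsewhere. -/
noncomputable def Kn (n : ℕ) : Tensor n ℂ :=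
  fun x => if (x.2.1 : ℕ) = (x.1 : ℕ) + (x.2.2 : ℕ) then 1 else 0


lemma det_zero_of_factor {n r : ℕ} (hr : r < n) (M : Matrix (Fin n) (Fin n) ℂ)
    (A : Matrix (Fin n) (Fin r) ℂ) (B : Matrix (Fin r) (Fin n) ℂ) (h : M = A * B) :
    M.det = 0 := by
  by_contra hd
  have hu : IsUnit M := (Matrix.isUnit_iff_isUnit_det M).mpr (isUnit_iff_ne_zero.mpr hd)
  have h1 : M.rank = n := by simpa using Matrix.rank_of_isUnit M hu
  have h2 : M.rank ≤ r := by
    rw [h]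
    exact le_trans (Matrix.rank_mul_le_left A B) (by simpa using Matrix.rank_le_card_width A)
  omega

lemma vdet_ne {N : ℕ} : (Matrix.vandermonde (fun l : Fin N => ((l:ℕ):ℂ))).det ≠ 0 := by
  rw [Matrix.det_vandermonde]
  apply Finset.prod_ne_zero_iff.mpr; intro i _
  apply Finset.prod_ne_zero_iff.mpr; intro j hj
  have h1 : (i:ℕ) < (j:ℕ) := (Finset.mem_Ioi.mp hj : i < j)
  have h2 : ((i:ℕ):ℂ) ≠ ((j:ℕ):ℂ) := by exact_mod_cast h1.ne
  exact sub_ne_zero.mpr (Ne.symm h2)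

lemma vand_sum {N : ℕ} (m b : Fin N) :
    ∑ l : Fin N, ((l:ℕ):ℂ)^(m:ℕ) * ((Matrix.vandermonde fun l : Fin N => ((l:ℕ):ℂ))ᵀ)⁻¹ l b
      = if m = b then 1 else 0 := by
  set V := Matrix.vandermonde fun l : Fin N => ((l:ℕ):ℂ) with hV
  have hdet : IsUnit Vᵀ.det := by
    rw [Matrix.det_transpose]; exact isUnit_iff_ne_zero.mpr vdet_ne
  have h := Matrix.mul_nonsing_inv Vᵀ hdet
  have h2 := congrFun (congrFun h m) b
  simpa [Matrix.mul_apply, Matrix.one_apply, Matrix.transpose_apply, Matrix.vandermonde, hV]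
    using h2

/-- Substitution-method lower bound for Toeplitz-slice tensors. -/
lemma rank_lb (n : ℕ) : ∀ t : ℕ, 1 ≤ t → t ≤ n →
    ∀ g : Fin n → ℕ → ℂ,
    (∀ m : Fin n, (m:ℕ) < t → g m (m:ℕ) = 1) →
    (∀ m : Fin n, (m:ℕ) < t → ∀ j, j < (m:ℕ) → g m j = 0) →
    ∀ r : ℕ,
    Tensor.HasRankLE
      (fun x : Fin n × Fin n × Fin n =>
        if (x.2.2:ℕ) < t ∧ (x.1:ℕ) ≤ (x.2.1:ℕ) then g x.2.2 ((x.2.1:ℕ) - (x.1:ℕ)) else 0) r →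
    n + t ≤ r + 1 := by
  intro t
  induction t with
  | zero => intro h; omega
  | succ t ih =>
    intro _ htn g hg1 hg0 r hr
    obtain ⟨u, v, w, hT⟩ := hr
    have hn : 0 < n := by omega
    rcases Nat.eq_zero_or_pos t with ht0 | ht1
    · -- base case t+1 = 1
      subst ht0
      have hc0 : (0:ℕ) < n := hn
      set c0 : Fin n := ⟨0, hc0⟩ with hc0d
      set M : Matrix (Fin n) (Fin n) ℂ :=
        Matrix.of (fun a b : Fin n =>
          if ((c0:ℕ) < 1 ∧ (a:ℕ) ≤ (b:ℕ)) then g c0 ((b:ℕ) - (a:ℕ)) else 0) with hM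
      have hfac : M = (Matrix.of fun (a : Fin n) (l : Fin r) => u l a)
          * (Matrix.of fun (l : Fin r) (b : Fin n) => v l b * w l c0) := by
        ext a b
        have := congrFun hT (a, b, c0)
        simp only [hM, Matrix.mul_apply, Matrix.of_apply]
        rw [this]
        exact Finset.sum_congr rfl (fun l _ => by ring
        )
      have hdiag : ∀ a : Fin n, M a a = 1 := by
        intro a
        simp only [hM, Matrix.of_apply]
        rw [if_pos ⟨by simp [hc0d], le_refl _⟩]
        simpa using hg1 c0 (by simp [hc0d])
      have htri : M.BlockTriangular id := by
        intro i j hij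
        simp only [hM, Matrix.of_apply]
        rw [if_neg]
        rintro ⟨-, hle⟩
        exact absurd hle (by exact_mod_cast not_le.mpr hij)
      have hdet : M.det = 1 := by
        rw [Matrix.det_of_upperTriangular htri]
        simp [hdiag]
      have hrn : n ≤ r := by
        by_contra hlt
        have := det_zero_of_factor (not_le.mp hlt) M _ _ hfac
        rw [hdet] at this; exact one_ne_zero this
      omega
    · -- inductive step: live slices 0..t, remove slice p = t
      have hpn : t < n := by omega
      set p : Fin n := ⟨t, hpn⟩ with hpd
      set a0 : Fin n := ⟨0, hn⟩ with ha0d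
      have hpv : (p:ℕ) = t := rfl
      have ha0v : (a0:ℕ) = 0 := rfl
      have hval : (∑ l, u l a0 * v l p * w l p) = 1 := by
        have := congrFun hT (a0, p, p)
        simp only at this
        rw [← this, if_pos ⟨by simp [hpd], by simp [ha0d]⟩]
        have : (p:ℕ) - (a0:ℕ) = t := by simp [hpd, ha0d]
        rw [this]
        exact hg1 p (by simp [hpd])
      have hex : ∃ i0 : Fin r, u i0 a0 * v i0 p * w i0 p ≠ 0 := by
        by_contra hc
        push_neg at hc
        rw [Finset.sum_eq_zero (fun l _ => hc l)] at hval
        exact one_ne_zero hval.symm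
      obtain ⟨i0, hi0⟩ := hex
      have hwp : w i0 p ≠ 0 := fun h => hi0 (by rw [h, mul_zero])
      rcases r with - | r'
      · exact i0.elim0
      -- new data
      set lam : Fin n → ℂ := fun m => w i0 m / w i0 p with hlam
      set g' : Fin n → ℕ → ℂ := fun m j => g m j - lam m * g p j with hg'
      set u' : Fin r' → Fin n → ℂ := fun l => u (i0.succAbove l) with hu'
      set v' : Fin r' → Fin n → ℂ := fun l => v (i0.succAbove l) with hv'
      set w' : Fin r' → Fin n → ℂ := fun l m =>
        if (m:ℕ) < t then w (i0.succAbove l) m - lam m * w (i0.succAbove l) p else 0 with hw'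
      have key : n + t ≤ r' + 1 := by
        apply ih ht1 (by omega) g'
        · intro m hm
          simp only [hg', hlam]
          rw [hg1 m (by omega), hg0 p (by simp [hpd]) m (by simpa [hpd] using hm)]
          ring
        · intro m hm j hj
          simp only [hg', hlam]
          rw [hg0 m (by omega) j hj, hg0 p (by simp [hpd]) j (by omega)] -- uses hpv
          ring
        · refine ⟨u', v', w', ?_⟩
          funext x
          obtain ⟨a, b, m⟩ := x
          simp only
          -- the full sum over Fin (r'+1) of the modified terms
          have hsplit := Fin.sum_univ_succAbove
            (fun l : Fin (r'+1) => u l a * v l b *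
              (if (m:ℕ) < t then w l m - lam m * w l p else 0)) i0
          have hzero : u i0 a * v i0 b *
              (if (m:ℕ) < t then w i0 m - lam m * w i0 p else 0) = 0 := by
            rcases lt_or_ge (m:ℕ) t with h | h
            · rw [if_pos h]
              simp only [hlam]
              rw [div_mul_cancel₀ _ hwp]
              ring
            · rw [if_neg (not_lt.mpr h), mul_zero]
          by_cases hmt : (m:ℕ) < t
          · have hTm := congrFun hT (a, b, m)
            have hTp := congrFun hT (a, b, p)
            simp only at hTm hTp
            have hfull : (∑ l : Fin (r'+1), u l a * v l b *
                (if (m:ℕ) < t then w l m - lam m * w l p else 0))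
                = (if ((m:ℕ) < t + 1 ∧ (a:ℕ) ≤ (b:ℕ)) then g m ((b:ℕ)-(a:ℕ)) else 0)
                  - lam m * (if ((p:ℕ) < t + 1 ∧ (a:ℕ) ≤ (b:ℕ)) then g p ((b:ℕ)-(a:ℕ)) else 0) := by
              rw [hTm, hTp]
              rw [Finset.mul_sum, ← Finset.sum_sub_distrib]
              apply Finset.sum_congr rfl
              intro l _
              rw [if_pos hmt]
              ring
            have hrhs : (∑ l : Fin r', u' l a * v' l b * w' l m)
                = (∑ l : Fin (r'+1), u l a * v l b *
                  (if (m:ℕ) < t then w l m - lam m * w l p else 0)) := by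
              rw [hsplit, hzero, zero_add]
            rw [hrhs, hfull]
            have hp1 : (p:ℕ) < t + 1 := by simp [hpd]
            have hm1 : (m:ℕ) < t + 1 := by omega
            by_cases hab : (a:ℕ) ≤ (b:ℕ)
            · rw [if_pos ⟨hmt, hab⟩, if_pos ⟨hm1, hab⟩, if_pos ⟨hp1, hab⟩]
            · rw [if_neg (fun h => hab h.2), if_neg (fun h => hab h.2),
                if_neg (fun h => hab h.2)]
              ring
          · rw [if_neg (fun h => hmt h.1)]
            symm
            apply Finset.sum_eq_zero
            intro l _
            simp only [hw', if_neg hmt, mul_zero]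
      omega


lemma Kn_rank_le (n : ℕ) (hn : 1 ≤ n) : (Kn n).HasRankLE (2*n-1) := by
  have hblt : ∀ b : Fin n, (b:ℕ) < 2*n-1 := fun b => by have := b.isLt; omega
  set V := Matrix.vandermonde fun l : Fin (2*n-1) => ((l:ℕ):ℂ) with hV
  refine ⟨fun l a => ((l:ℕ):ℂ)^(a:ℕ), fun l b => (Vᵀ)⁻¹ l ⟨(b:ℕ), hblt b⟩,
    fun l c => ((l:ℕ):ℂ)^(c:ℕ), ?_⟩
  funext x
  obtain ⟨a, b, c⟩ := x
  have hac : (a:ℕ)+(c:ℕ) < 2*n-1 := by have := a.isLt; have := c.isLt; omega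
  have h1 : (∑ l : Fin (2*n-1), ((l:ℕ):ℂ)^(a:ℕ) * (Vᵀ)⁻¹ l ⟨(b:ℕ), hblt b⟩ * ((l:ℕ):ℂ)^(c:ℕ))
      = ∑ l : Fin (2*n-1), ((l:ℕ):ℂ)^(((⟨(a:ℕ)+(c:ℕ), hac⟩ : Fin (2*n-1)):ℕ))
          * (Vᵀ)⁻¹ l ⟨(b:ℕ), hblt b⟩ := by
    apply Finset.sum_congr rfl
    intro l _
    have : (((⟨(a:ℕ)+(c:ℕ), hac⟩ : Fin (2*n-1)):ℕ)) = (a:ℕ)+(c:ℕ) := rfl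
    rw [this, pow_add]; ring
  have key := vand_sum (N := 2*n-1) ⟨(a:ℕ)+(c:ℕ), hac⟩ ⟨(b:ℕ), hblt b⟩
  simp only [Kn]
  rw [h1, hV, key]
  by_cases hcase : (b:ℕ) = (a:ℕ)+(c:ℕ)
  · rw [if_pos hcase, if_pos (Fin.mk_eq_mk.mpr hcase.symm)]
  · rw [if_neg hcase, if_neg (fun hh => hcase ((Fin.mk_eq_mk.mp hh).symm))]

lemma Kn_border (n : ℕ) (hn : 1 ≤ n) :
    Kn n ∈ closure {Q : Tensor n ℂ | Q.HasRankLE n} := by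
  set V := Matrix.vandermonde fun l : Fin n => ((l:ℕ):ℂ) with hV
  set W : Matrix (Fin n) (Fin n) ℂ := (Vᵀ)⁻¹ with hW
  set T : ℕ → Tensor n ℂ := fun k x =>
    ∑ l : Fin n, (((k:ℂ)+1)⁻¹ * ((l:ℕ):ℂ))^(x.1:ℕ)
      * (W l x.2.1 * ((k:ℂ)+1)^(x.2.1:ℕ)) * (((k:ℂ)+1)⁻¹ * ((l:ℕ):ℂ))^(x.2.2:ℕ) with hT
  have hk : ∀ k : ℕ, ((k:ℂ)+1) ≠ 0 := by
    intro k
    intro h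
    have : ((k:ℂ)+1) = ((k+1 : ℕ) : ℂ) := by push_cast; ring
    rw [this] at h
    exact_mod_cast h
  have hinv : Filter.Tendsto (fun k : ℕ => ((k:ℂ)+1)⁻¹) Filter.atTop (nhds 0) := by
    have h1 : Filter.Tendsto (fun k : ℕ => 1 / ((k : ℝ) + 1)) Filter.atTop (nhds 0) :=
      tendsto_one_div_add_atTop_nhds_zero_nat
    have h2 : Filter.Tendsto (fun k : ℕ => ((1 / ((k:ℝ)+1) : ℝ) : ℂ)) Filter.atTop
        (nhds ((0:ℝ):ℂ)) := (Complex.continuous_ofReal.tendsto 0).comp h1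
    have h3 : (fun k : ℕ => ((1 / ((k:ℝ)+1) : ℝ) : ℂ)) = fun k : ℕ => ((k:ℂ)+1)⁻¹ := by
      funext k; push_cast; rw [one_div]
    rw [← h3]
    simpa using h2
  apply mem_closure_of_tendsto (f := T) (b := Filter.atTop)
  · rw [tendsto_pi_nhds]
    intro x
    obtain ⟨a, b, c⟩ := x
    have hsimp : ∀ k : ℕ, T k (a,b,c) = (((k:ℂ)+1)⁻¹)^((a:ℕ)+(c:ℕ)) * ((k:ℂ)+1)^(b:ℕ)
        * (∑ l : Fin n, ((l:ℕ):ℂ)^((a:ℕ)+(c:ℕ)) * W l b) := by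
      intro k
      rw [hT]
      simp only
      rw [Finset.mul_sum]
      apply Finset.sum_congr rfl
      intro l _
      rw [mul_pow, mul_pow, pow_add]
      ring
    by_cases hbac : (b:ℕ) = (a:ℕ) + (c:ℕ)
    · have hS : (∑ l : Fin n, ((l:ℕ):ℂ)^((a:ℕ)+(c:ℕ)) * W l b) = 1 := by
        have := vand_sum (N := n) b b
        rw [if_pos rfl] at this
        rw [← this]
        apply Finset.sum_congr rfl
        intro l _
        rw [← hbac]
      have hconst : ∀ k : ℕ, T k (a,b,c) = 1 := by
        intro k
        rw [hsimp k, hS, mul_one, ← hbac, ← mul_pow, inv_mul_cancel₀ (hk k), one_pow]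
      have hKv : Kn n (a,b,c) = 1 := by simp [Kn, hbac]
      rw [hKv]
      simp only [hconst]
      exact tendsto_const_nhds
    · have hKv : Kn n (a,b,c) = 0 := by simp [Kn, hbac]
      rw [hKv]
      by_cases hlt : (a:ℕ) + (c:ℕ) < n
      · have hS : (∑ l : Fin n, ((l:ℕ):ℂ)^((a:ℕ)+(c:ℕ)) * W l b) = 0 := by
          have := vand_sum (N := n) ⟨(a:ℕ)+(c:ℕ), hlt⟩ b
          rw [if_neg (by intro h; apply hbac; have := congrArg Fin.val h; simpa using this.symm)] at this
          rw [← this]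
        have hconst : ∀ k : ℕ, T k (a,b,c) = 0 := by
          intro k; rw [hsimp k, hS, mul_zero]
        simp only [hconst]
        exact tendsto_const_nhds
      · -- a+c ≥ n > b
        have hble : (b:ℕ) ≤ (a:ℕ)+(c:ℕ) := by have := b.isLt; omega
        have hd : 1 ≤ (a:ℕ)+(c:ℕ) - (b:ℕ) := by have := b.isLt; omega
        set S : ℂ := ∑ l : Fin n, ((l:ℕ):ℂ)^((a:ℕ)+(c:ℕ)) * W l b with hS
        have hform : ∀ k : ℕ, T k (a,b,c) = (((k:ℂ)+1)⁻¹)^((a:ℕ)+(c:ℕ)-(b:ℕ)) * S := by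
          intro k
          rw [hsimp k]
          have hpow : ∀ (q p : ℕ), p ≤ q →
              (((k:ℂ)+1)⁻¹)^q * ((k:ℂ)+1)^p = (((k:ℂ)+1)⁻¹)^(q-p) := by
            intro q p hpq
            obtain ⟨d, rfl⟩ : ∃ d, q = d + p := ⟨q - p, by omega⟩
            rw [Nat.add_sub_cancel, pow_add, mul_assoc, ← mul_pow,
              inv_mul_cancel₀ (hk k), one_pow, mul_one]
          rw [← hpow ((a:ℕ)+(c:ℕ)) (b:ℕ) hble]
        simp only [hform]
        have := (hinv.pow ((a:ℕ)+(c:ℕ)-(b:ℕ))).mul_const S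
        rw [zero_pow (by omega), zero_mul] at this
        exact this
  · apply Filter.Eventually.of_forall
    intro k
    exact ⟨fun l a => (((k:ℂ)+1)⁻¹ * ((l:ℕ):ℂ))^(a:ℕ),
      fun l b => W l b * ((k:ℂ)+1)^(b:ℕ),
      fun l c => (((k:ℂ)+1)⁻¹ * ((l:ℕ):ℂ))^(c:ℕ), rfl⟩

lemma Kn_rank_ge (n : ℕ) (hn : 1 ≤ n) (r : ℕ) (h : (Kn n).HasRankLE r) : n + n ≤ r + 1 := by
  apply rank_lb n n hn le_rfl (fun m j => if j = (m:ℕ) then (1:ℂ) else 0)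
  · intro m _; simp
  · intro m _ j hj; simp [Nat.ne_of_lt hj]
  · obtain ⟨u, v, w, hw⟩ := h
    refine ⟨u, v, w, ?_⟩
    rw [← hw]
    funext x
    obtain ⟨a, b, c⟩ := x
    have hc := c.isLt
    simp only [Kn]
    split_ifs <;> first | rfl | omega

lemma border_lower (n : ℕ) (hn : 1 ≤ n) (r : ℕ)
    (h : Kn n ∈ closure {Q : Tensor n ℂ | Q.HasRankLE r}) : n ≤ r := by
  by_contra hlt
  push_neg at hlt
  set c0 : Fin n := ⟨0, hn⟩ with hc0
  set f : Tensor n ℂ → ℂ := fun Q => (Matrix.of fun b a : Fin n => Q (a, b, c0)).det with hf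
  have hcont : Continuous f := by
    apply Continuous.matrix_det
    apply continuous_matrix
    intro i j
    exact continuous_apply _
  have hclosed : IsClosed {Q : Tensor n ℂ | f Q = 0} := isClosed_eq hcont continuous_const
  have hsub : {Q : Tensor n ℂ | Q.HasRankLE r} ⊆ {Q | f Q = 0} := by
    rintro Q ⟨u, v, w, hQ⟩
    apply det_zero_of_factor hlt _ (Matrix.of fun (b : Fin n) (l : Fin r) => v l b * w l c0)
      (Matrix.of fun (l : Fin r) (a : Fin n) => u l a)
    ext b a
    simp only [Matrix.mul_apply, Matrix.of_apply, hQ]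
    exact Finset.sum_congr rfl fun l _ => by ring
  have hKz : f (Kn n) = 0 := closure_minimal hsub hclosed h
  have hKo : f (Kn n) = 1 := by
    have hid : (Matrix.of fun b a : Fin n => Kn n (a, b, c0)) = 1 := by
      ext b a
      simp only [Matrix.of_apply, Kn, Matrix.one_apply]
      have hc0v : (c0:ℕ) = 0 := rfl
      by_cases hba : b = a
      · subst hba; rw [if_pos (by omega), if_pos rfl]
      · rw [if_neg, if_neg hba]
        intro hh
        exact hba (Fin.ext (by omega))
    rw [hf]
    simp only
    rw [hid, Matrix.det_one]
  rw [hKz] at hKo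
  exact one_ne_zero hKo.symm

/-- `K_n` has border rank `n` and complex tensor rank exactly `2n-1`. -/
theorem statement_19 (n : ℕ) (hn : 1 ≤ n) :
    Tensor.borderRank (Kn n) = n ∧ Tensor.rank (Kn n) = 2 * n - 1 := by
  have hb : Tensor.borderRank (Kn n)
      = sInf {r | Kn n ∈ closure {Q : Tensor n ℂ | Q.HasRankLE r}} := rfl
  have hr : Tensor.rank (Kn n) = sInf {r | (Kn n).HasRankLE r} := rfl
  constructor
  · rw [hb]
    apply le_antisymm
    · exact Nat.sInf_le (Kn_border n hn)
    · apply le_csInf ⟨n, Kn_border n hn⟩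
      intro r hr
      exact border_lower n hn r hr
  · rw [hr]
    apply le_antisymm
    · exact Nat.sInf_le (Kn_rank_le n hn)
    · have hmem : (2*n-1) ∈ {r | (Kn n).HasRankLE r} := Kn_rank_le n hn
      apply le_csInf ⟨2*n-1, hmem⟩
      intro r hrr
      have := Kn_rank_ge n hn r hrr
      omega
end
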